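/- Given an independent set I of size b in a static graph G_I with n vertices, the temporal graph G of the reduction contains a colorful temporal path of length (b+1)(n+1), obtained by concatenating the paths p(V_{i_1}), …, p(V_{i_b}) (for I = {v_{i_1}, …, v_{i_b}} with i_1 < … < i_b) and p(V_{n+1}) via the connecting temporal edges {v_{i_x,n}, v_{i_{x+1},0}, (n+1)i_x} and {v_{i_b,n}, v_{n+1,0}, (n+1)i_b}. -/

import Mathlib

/-- A temporal path: distinct vertices joined by temporal edges with
strictly increasing timestamps. -/
structure TemporalPath (V : Type) (τ : Type) [LT τ] (E : V → V → τ → Prop) where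
  verts : List V
  times : List τ
  len_eq : verts.length = times.length + 1
  nodup : verts.Nodup
  incr : times.Chain' (· < ·)
  edge : ∀ i (h : i < times.length),
    E (verts.get ⟨i, by omega⟩) (verts.get ⟨i + 1, by omega⟩) (times.get ⟨i, h⟩)

/-- Colors of the reduction: `a i q` is the color `a_i^q` and `col i j` is the
color `c_{i,j}`; all these colors are pairwise distinct. -/
inductive Color where
  | a : ℕ → ℕ → Color
  | col : ℕ → ℕ → Color
deriving DecidableEq

/-- The coloring of vertex `v_{i,x}` in the reduction from `Max IS`
(adjacency given by `Adj` on vertices `1, …, n`). -/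
def reductionColor (n : ℕ) (Adj : ℕ → ℕ → Bool) (i x : ℕ) : Color :=
  if i = n + 1 then Color.a (n + 1) x
  else if x = 0 then Color.a i 0
  else if Adj i x then Color.col (min i x) (max i x)
  else Color.a i x

/-- Temporal edges of the reduction graph `G` on vertices `v_{i,x}`
(encoded as pairs `(i,x)`): the edges of the path `p(V_i)` at timestamps
`n(i-1)+i+x`, and the connecting edges at timestamps `(n+1)i`. -/
def redE (n : ℕ) (Adj : ℕ → ℕ → Bool) (u v : ℕ × ℕ) (t : ℕ) : Prop :=
  (∃ i x, 1 ≤ i ∧ i ≤ n + 1 ∧ x + 1 ≤ n ∧ u = (i, x) ∧ v = (i, x + 1) ∧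
      t = n * (i - 1) + i + x) ∨
  (∃ i z, 1 ≤ i ∧ i < z ∧ z ≤ n ∧ Adj i z = false ∧ u = (i, n) ∧ v = (z, 0) ∧
      t = (n + 1) * i) ∨
  (∃ i, 1 ≤ i ∧ i ≤ n ∧ u = (i, n) ∧ v = (n + 1, 0) ∧ t = (n + 1) * i)

section Aux

variable (n : ℕ) (Adj : ℕ → ℕ → Bool)

/-- The block of vertices of `p(V_i)`. -/
def blockV (i : ℕ) : List (ℕ × ℕ) := (List.range (n+1)).map (fun x => (i, x))

/-- The timestamps of the concatenated path. -/
def tms : List ℕ → List ℕ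
  | [] => []
  | [i] => (List.range n).map (fun x => (n+1)*i - n + x)
  | i :: j :: rest =>
      ((List.range n).map (fun x => (n+1)*i - n + x)) ++ ((n+1)*i :: tms (j :: rest))

lemma blockV_length (i : ℕ) : (blockV n i).length = n + 1 := by
  simp [blockV]

lemma verts_length : ∀ L : List ℕ, (L.flatMap (blockV n)).length = L.length * (n+1)
  | [] => by simp
  | i :: rest => by
      simp [List.flatMap_cons, blockV, verts_length rest]; ring

lemma tms_head (hn : 1 ≤ n) (j : ℕ) (rest : List ℕ) :
    (tms n (j :: rest)).head? = some ((n+1)*j - n) := by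
  obtain ⟨m, rfl⟩ : ∃ m, n = m + 1 := ⟨n - 1, by omega⟩
  cases rest <;> simp [tms, List.range_succ_eq_map]

lemma chain_block (hn : 1 ≤ n) (i : ℕ) :
    ((List.range n).map (fun x => (n+1)*i - n + x)).Chain' (· < ·) := by
  rw [List.Chain', List.isChain_map]
  exact ((List.pairwise_lt_range (n := n)).imp (fun h => by omega)).isChain

lemma key (hn : 1 ≤ n) : ∀ L : List ℕ, L ≠ [] →
    (∀ i ∈ L, 1 ≤ i ∧ i ≤ n+1) →
    L.Chain' (fun i z => i < z ∧ (z = n+1 ∨ (z ≤ n ∧ Adj i z = false))) →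
    (tms n L).length + 1 = (L.flatMap (blockV n)).length ∧
    (tms n L).Chain' (· < ·) ∧
    ∀ k (hk : k < (tms n L).length) (h0 : k < (L.flatMap (blockV n)).length)
      (h1 : k + 1 < (L.flatMap (blockV n)).length),
      redE n Adj ((L.flatMap (blockV n))[k]'h0)
        ((L.flatMap (blockV n))[k+1]'h1) ((tms n L)[k]'hk) := by
  intro L
  induction L with
  | nil => intro h; exact absurd rfl h
  | cons i rest ih =>
    intro _ hmem hch
    have hi1 : 1 ≤ i := (hmem i (by simp)).1
    have hi2 : i ≤ n + 1 := (hmem i (by simp)).2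
    have hfact : n*(i-1) + n = n*i := by
      have h : i - 1 + 1 = i := by omega
      calc n*(i-1) + n = n*((i-1)+1) := by ring
        _ = n*i := by rw [h]
    have hfact2 : (n+1)*i = n*i + i := by ring
    cases rest with
    | nil =>
      refine ⟨by simp [tms, blockV], chain_block n hn i, ?_⟩
      intro k hk h0 h1
      simp only [tms, List.length_map, List.length_range] at hk
      left
      refine ⟨i, k, hi1, hi2, by omega, ?_, ?_, ?_⟩
      · simp [List.flatMap_cons, blockV, List.getElem_append_left,
          List.getElem_map, List.getElem_range]
      · simp [List.flatMap_cons, blockV, List.getElem_append_left,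
          List.getElem_map, List.getElem_range]
      · simp only [tms, List.getElem_map, List.getElem_range]
        omega
    | cons j rest' =>
      have hj1 : 1 ≤ j := (hmem j (by simp)).1
      have hj2 : j ≤ n + 1 := (hmem j (by simp)).2
      have hij : i < j ∧ (j = n+1 ∨ (j ≤ n ∧ Adj i j = false)) :=
        (List.isChain_cons_cons.mp hch).1
      obtain ⟨hlen, hchain, hedge⟩ := ih (by simp)
        (fun x hx => hmem x (by simp [hx])) hch.tail
      have hjlt : (n+1)*i < (n+1)*j - n := by
        have h1 : (n+1)*(i+1) ≤ (n+1)*j := Nat.mul_le_mul_left _ hij.1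
        have h2 : (n+1)*i + (n+1) = (n+1)*(i+1) := by ring
        omega
      refine ⟨?_, ?_, ?_⟩
      · simp only [tms, List.flatMap_cons, List.length_append, List.length_map,
          List.length_range, List.length_cons, blockV_length] at hlen ⊢
        omega
      · show (((List.range n).map (fun x => (n+1)*i - n + x)) ++
            ((n+1)*i :: tms n (j :: rest'))).Chain' (· < ·)
        rw [List.Chain', List.isChain_append]
        refine ⟨chain_block n hn i, ?_, ?_⟩
        · rw [List.isChain_cons]
          refine ⟨?_, hchain⟩
          intro y hy
          rw [tms_head n hn] at hy
          simp only [Option.mem_def, Option.some.injEq] at hy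
          omega
        · intro x hx y hy
          simp only [List.head?_cons, Option.mem_def, Option.some.injEq] at hy
          subst hy
          rw [List.getLast?_eq_getElem?] at hx
          simp only [List.length_map, List.length_range] at hx
          rw [List.getElem?_eq_getElem (by simp; omega)] at hx
          simp only [Option.mem_def, Option.some.injEq, List.getElem_map,
            List.getElem_range] at hx
          have h3 : (n+1) * 1 ≤ (n+1)*i := Nat.mul_le_mul_left _ hi1
          omega
      · intro k hk h0 h1
        have hvcons : (i :: j :: rest').flatMap (blockV n)
            = blockV n i ++ (j :: rest').flatMap (blockV n) := List.flatMap_cons ..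
        have htcons : tms n (i :: j :: rest')
            = ((List.range n).map (fun x => (n+1)*i - n + x)) ++
              ((n+1)*i :: tms n (j :: rest')) := rfl
        have hbl : (blockV n i).length = n + 1 := blockV_length n i
        have hk2 : k < n + 1 + (tms n (j :: rest')).length := by
          have h := hk
          simp only [htcons, List.length_append, List.length_map, List.length_range,
            List.length_cons] at h
          omega
        rcases lt_trichotomy k n with hkn | hkn | hkn
        · -- inside first block
          left
          refine ⟨i, k, hi1, hi2, by omega, ?_, ?_, ?_⟩
          · simp only [hvcons]
            rw [List.getElem_append_left (by omega)]
            simp [blockV]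
          · simp only [hvcons]
            rw [List.getElem_append_left (by omega)]
            simp [blockV]
          · simp only [htcons]
            rw [List.getElem_append_left (by simp; omega)]
            simp only [List.getElem_map, List.getElem_range]
            omega
        · -- connector edge
          have hv1 : ((i :: j :: rest').flatMap (blockV n))[k]'h0 = (i, n) := by
            simp only [hvcons]
            rw [List.getElem_append_left (by omega)]
            simp only [blockV, List.getElem_map, List.getElem_range]
            simp [hkn]
          have hvcons' : (j :: rest').flatMap (blockV n)
              = blockV n j ++ rest'.flatMap (blockV n) := List.flatMap_cons ..
          have hv2 : ((i :: j :: rest').flatMap (blockV n))[k+1]'h1 = (j, 0) := by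
            simp only [hvcons]
            rw [List.getElem_append_right (by omega)]
            rw [List.getElem_of_eq hvcons']
            rw [List.getElem_append_left (by simp [blockV]; omega)]
            simp only [blockV, List.getElem_map, List.getElem_range,
              List.length_map, List.length_range]
            simp only [Prod.mk.injEq, true_and]
            omega
          have ht : (tms n (i :: j :: rest'))[k]'hk = (n+1)*i := by
            simp only [htcons]
            rw [List.getElem_append_right (by simp; omega)]
            simp only [List.length_map, List.length_range]
            rw [List.getElem_cons]
            split
            · rfl
            · exfalso; omega
          rw [hv1, hv2, ht]
          rcases hij.2 with hj | ⟨hjn, hadj⟩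
          · right; right
            exact ⟨i, hi1, by omega, rfl, by rw [hj], rfl⟩
          · right; left
            exact ⟨i, j, hi1, hij.1, hjn, hadj, rfl, rfl, rfl⟩
        · -- inside the rest
          obtain ⟨m, rfl⟩ : ∃ m, k = n + 1 + m := ⟨k - (n+1), by omega⟩
          have hm : m < (tms n (j :: rest')).length := by omega
          have hrl := verts_length n (j :: rest')
          have h0' : m < ((j :: rest').flatMap (blockV n)).length := by omega
          have h1' : m + 1 < ((j :: rest').flatMap (blockV n)).length := by omega
          have e1 : ((i :: j :: rest').flatMap (blockV n))[n+1+m]'h0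
              = ((j :: rest').flatMap (blockV n))[m]'h0' := by
            simp only [hvcons]
            rw [List.getElem_append_right (by omega)]
            congr 1; omega
          have e2 : ((i :: j :: rest').flatMap (blockV n))[n+1+m+1]'h1
              = ((j :: rest').flatMap (blockV n))[m+1]'h1' := by
            simp only [hvcons]
            rw [List.getElem_append_right (by omega)]
            congr 1; omega
          have e3 : (tms n (i :: j :: rest'))[n+1+m]'hk
              = (tms n (j :: rest'))[m]'hm := by
            simp only [htcons]
            rw [List.getElem_append_right (by
              simp only [List.length_map, List.length_range]
              omega)]
            simp only [List.length_map, List.length_range]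
            rw [List.getElem_cons]
            split
            · exfalso; omega
            · congr 1; omega
          rw [e1, e2, e3]
          exact hedge m hm h0' h1'

end Aux

section Aux2

variable (n : ℕ) (Adj : ℕ → ℕ → Bool)

lemma rc_spec (i x : ℕ) : reductionColor n Adj i x = Color.a i x ∨
    (i ≠ n+1 ∧ x ≠ 0 ∧ Adj i x = true ∧
      reductionColor n Adj i x = Color.col (min i x) (max i x)) := by
  unfold reductionColor
  split_ifs with h1 h2 h3
  · left; rw [h1]
  · left; rw [h2]
  · right; exact ⟨h1, h2, h3, rfl⟩
  · left; rfl

lemma rc_block_inj (i x y : ℕ)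
    (h : reductionColor n Adj i x = reductionColor n Adj i y) : x = y := by
  rcases rc_spec n Adj i x with hx | ⟨_, _, hax, hx⟩ <;>
    rcases rc_spec n Adj i y with hy | ⟨_, _, hay, hy⟩ <;>
      rw [hx, hy] at h <;> simp at h <;> omega

lemma rc_ne_cross (i j : ℕ) (hi2 : i ≤ n+1) (hj2 : j ≤ n+1) (hij : i ≠ j)
    (hA : i ≤ n → j ≤ n → Adj i j = false ∧ Adj j i = false) (x y : ℕ) :
    reductionColor n Adj i x ≠ reductionColor n Adj j y := by
  intro h
  rcases rc_spec n Adj i x with hx | ⟨hi', hx0, hax, hx⟩ <;>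
    rcases rc_spec n Adj j y with hy | ⟨hj', hy0, hay, hy⟩ <;>
      rw [hx, hy] at h <;> simp at h
  · exact hij h.1
  · have hxy : (x = j ∧ y = i) ∨ (i = j ∧ x = y) := by omega
    rcases hxy with ⟨rfl, rfl⟩ | ⟨rfl, rfl⟩
    · have hf := (hA (by omega) (by omega)).1
      rw [hf] at hax
      exact Bool.false_ne_true hax
    · exact hij rfl

lemma colors_nodup : ∀ L : List ℕ,
    (∀ i ∈ L, 1 ≤ i ∧ i ≤ n+1) →
    L.Pairwise (fun i j => i ≠ j ∧
      (i ≤ n → j ≤ n → Adj i j = false ∧ Adj j i = false)) →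
    (L.flatMap (fun i =>
      (List.range (n+1)).map (fun x => reductionColor n Adj i x))).Nodup := by
  intro L
  induction L with
  | nil => simp
  | cons i rest ih =>
    intro hmem hpw
    rw [List.flatMap_cons, List.nodup_append]
    refine ⟨?_, ih (fun x hx => hmem x (by simp [hx])) (List.Pairwise.of_cons hpw), ?_⟩
    · exact List.Nodup.map_on
        (fun x _ y _ h => rc_block_inj n Adj i x y h) List.nodup_range
    · intro c hc1 d hc2 hcd
      simp only [List.mem_map, List.mem_range] at hc1
      obtain ⟨x, hx, rfl⟩ := hc1
      simp only [List.mem_flatMap, List.mem_map, List.mem_range] at hc2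
      obtain ⟨j, hj, y, hy, rfl⟩ := hc2
      have hrel := (List.pairwise_cons.mp hpw).1 j hj
      exact rc_ne_cross n Adj i j (hmem i (by simp)).2 (hmem j (by simp [hj])).2
        hrel.1 hrel.2 x y hcd

end Aux2

/-- Given an independent set `I` of size `b` in `G_I`, the reduction graph
contains a colorful temporal path of length `(b+1)(n+1)`: the concatenation of
the paths `p(V_i)` for `i ∈ I` (in increasing order) and `p(V_{n+1})`. -/
theorem independent_set_to_colorful_path (n : ℕ) (hn : 1 ≤ n)
    (Adj : ℕ → ℕ → Bool)
    (hsym : ∀ i j, Adj i j = Adj j i) (hirr : ∀ i, Adj i i = false)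
    (I : Finset ℕ) (hI : ∀ i ∈ I, 1 ≤ i ∧ i ≤ n)
    (hind : ∀ i ∈ I, ∀ j ∈ I, i ≠ j → Adj i j = false) :
    ∃ p : TemporalPath (ℕ × ℕ) ℕ
        (fun u v t => redE n Adj u v t ∨ redE n Adj v u t),
      p.verts = (I.sort (· ≤ ·) ++ [n + 1]).flatMap
        (fun i => (List.range (n + 1)).map (fun x => (i, x))) ∧
      (p.verts.map (fun w => reductionColor n Adj w.1 w.2)).Nodup ∧
      p.verts.length = (I.card + 1) * (n + 1) := by
  set L : List ℕ := I.sort (· ≤ ·) ++ [n + 1] with hL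
  have hmemI : ∀ i ∈ I.sort (· ≤ ·), i ∈ I := fun i hi => (Finset.mem_sort _).mp hi
  have hmem : ∀ i ∈ L, 1 ≤ i ∧ i ≤ n + 1 := by
    intro i hi
    rcases List.mem_append.mp hi with h | h
    · have := hI i (hmemI i h); omega
    · simp at h; omega
  have hLne : L ≠ [] := by simp [hL]
  have hpwlt : (I.sort (· ≤ ·)).Pairwise (· < ·) := (Finset.sortedLT_sort I).pairwise
  have hchainL : L.Chain' (fun i z => i < z ∧ (z = n+1 ∨ (z ≤ n ∧ Adj i z = false))) := by
    rw [hL, List.Chain', List.isChain_append]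
    refine ⟨?_, by simp, ?_⟩
    · refine List.Pairwise.isChain (hpwlt.imp_of_mem ?_)
      intro a b ha hb hab
      refine ⟨hab, Or.inr ⟨(hI b (hmemI b hb)).2, hind a (hmemI a ha) b (hmemI b hb) (by omega)⟩⟩
    · intro x hx y hy
      simp only [List.head?_cons, Option.mem_def, Option.some.injEq] at hy
      have hxI : x ∈ I.sort (· ≤ ·) := List.mem_of_mem_getLast? hx
      have := hI x (hmemI x hxI)
      exact ⟨by omega, Or.inl hy.symm⟩
  obtain ⟨hlen, hincr, hedge⟩ := key n Adj hn L hLne hmem hchainL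
  have hpwcol : L.Pairwise (fun i j => i ≠ j ∧
      (i ≤ n → j ≤ n → Adj i j = false ∧ Adj j i = false)) := by
    rw [hL, List.pairwise_append]
    refine ⟨hpwlt.imp_of_mem ?_, by simp, ?_⟩
    · intro a b ha hb hab
      refine ⟨by omega, fun _ _ => ⟨hind a (hmemI a ha) b (hmemI b hb) (by omega),
        hind b (hmemI b hb) a (hmemI a ha) (by omega)⟩⟩
    · intro a ha b hb
      simp only [List.mem_singleton] at hb
      subst hb
      have := hI a (hmemI a ha)
      exact ⟨by omega, fun _ hc => absurd hc (by omega)⟩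
  have hcolors : ((L.flatMap (blockV n)).map
      (fun w => reductionColor n Adj w.1 w.2)).Nodup := by
    have hrw : (L.flatMap (blockV n)).map (fun w => reductionColor n Adj w.1 w.2)
        = L.flatMap (fun i =>
            (List.range (n+1)).map (fun x => reductionColor n Adj i x)) := by
      rw [List.map_flatMap]
      simp only [blockV, List.map_map]
      rfl
    rw [hrw]
    exact colors_nodup n Adj L hmem hpwcol
  have hnodup : (L.flatMap (blockV n)).Nodup := hcolors.of_map _
  have hLlen : L.length = I.card + 1 := by
    simp [hL, Finset.length_sort]
  refine ⟨⟨L.flatMap (blockV n), tms n L, hlen.symm, hnodup, hincr, ?_⟩, rfl, hcolors, ?_⟩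
  · intro k hk
    simp only [List.get_eq_getElem]
    exact Or.inl (hedge k hk (by omega) (by omega))
  · show (L.flatMap (blockV n)).length = (I.card + 1) * (n + 1)
    rw [verts_length n L, hLlen]
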